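/- Let A₀, A₁, …, A_k be symmetric positive definite p×p matrices with tr(A₀⁻¹A_i) = p for each i, and suppose A_j ≠ A₀ for some j. Let ν⁽ⁱ⁾₍₁₎ denote the smallest eigenvalue of A₀⁻¹A_i. Then min_i ν⁽ⁱ⁾₍₁₎ < 1, and for every i the matrix (1-t)A₀ + tA_i is positive definite for all t ∈ [0, 1/(1 − min_i ν⁽ⁱ⁾₍₁₎)). -/

import Mathlib

/-- With `tr(A₀⁻¹A_i) = p` for each of `k` groups and some `A_j ≠ A₀`, the minimum `m`
of the smallest eigenvalues of the `A₀⁻¹A_i` satisfies `m < 1`, and each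
`(1-t)A₀ + tA_i` is positive definite for `t ∈ [0, 1/(1-m))`. -/
theorem posDef_interval_groups {p k : ℕ} (A₀ : Matrix (Fin p) (Fin p) ℝ)
    (A : Fin k → Matrix (Fin p) (Fin p) ℝ)
    (hA₀ : A₀.PosDef) (hA : ∀ i, (A i).PosDef)
    (htr : ∀ i, (A₀⁻¹ * A i).trace = p)
    (hne : ∃ j, A j ≠ A₀)
    (ν : Fin k → ℝ)
    (hν : ∀ i, ν i ∈ spectrum ℝ (A₀⁻¹ * A i))
    (hνmin : ∀ i, ∀ μ ∈ spectrum ℝ (A₀⁻¹ * A i), ν i ≤ μ)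
    (m : ℝ) (hm : ∀ i, m ≤ ν i) (hm' : ∃ i, m = ν i) :
    m < 1 ∧ ∀ i, ∀ t ∈ Set.Ico (0 : ℝ) (1 / (1 - m)),
      ((1 - t) • A₀ + t • A i).PosDef := by
  classical
  open scoped MatrixOrder in
  set S := CFC.sqrt A₀ with hSdef
  open scoped MatrixOrder in
  have hS2 : S * S = A₀ := CFC.sqrt_mul_sqrt_self A₀ hA₀.posSemidef.nonneg
  open scoped MatrixOrder in
  have hSH : S.IsHermitian := (Matrix.nonneg_iff_posSemidef.1 (CFC.sqrt_nonneg A₀)).1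
  have hSU : IsUnit S := by
    have hu : IsUnit (S * S) := hS2 ▸ hA₀.isUnit
    have hd := (Matrix.isUnit_iff_isUnit_det _).1 hu
    rw [Matrix.det_mul] at hd
    exact (Matrix.isUnit_iff_isUnit_det S).2 (IsUnit.mul_iff.1 hd).1
  have hSdet : IsUnit S.det := (Matrix.isUnit_iff_isUnit_det S).1 hSU
  have hSS : S * S⁻¹ = 1 := Matrix.mul_nonsing_inv S hSdet
  have hSS' : S⁻¹ * S = 1 := Matrix.nonsing_inv_mul S hSdet
  have hSinvH : S⁻¹.IsHermitian := hSH.inv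
  have hA₀inv : A₀⁻¹ = S⁻¹ * S⁻¹ := by rw [← hS2, Matrix.mul_inv_rev]
  set B : Fin k → Matrix (Fin p) (Fin p) ℝ := fun i => S⁻¹ * A i * S⁻¹ with hBdef
  have hconj : ∀ i, B i = hSU.unit * (A₀⁻¹ * A i) * (↑hSU.unit⁻¹ : Matrix (Fin p) (Fin p) ℝ) := by
    intro i
    rw [Matrix.coe_units_inv, IsUnit.unit_spec, hA₀inv]
    calc S⁻¹ * A i * S⁻¹ = 1 * (S⁻¹ * A i * S⁻¹) := by rw [one_mul]
      _ = S * (S⁻¹ * S⁻¹ * A i) * S⁻¹ := by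
          rw [← hSS]; simp only [mul_assoc]
  have hspec : ∀ i, spectrum ℝ (B i) = spectrum ℝ (A₀⁻¹ * A i) := by
    intro i; rw [hconj i, spectrum.units_conjugate]
  have hBH : ∀ i, (B i).IsHermitian := by
    intro i
    have : (S⁻¹ * A i * S⁻¹).IsHermitian := by
      unfold Matrix.IsHermitian
      rw [Matrix.conjTranspose_mul, Matrix.conjTranspose_mul, hSinvH.eq, (hA i).1.eq, mul_assoc]
    exact this
  have hSA : ∀ i, A i = S * B i * S := by
    intro i
    calc A i = S * S⁻¹ * A i * (S⁻¹ * S) := by rw [hSS, hSS', one_mul, mul_one]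
      _ = S * B i * S := by simp only [hBdef, mul_assoc]
  -- Rayleigh lower bound
  have key : ∀ i, (B i - m • 1).PosSemidef := by
    intro i
    have hH : (B i - m • (1 : Matrix (Fin p) (Fin p) ℝ)).IsHermitian := by
      refine (hBH i).sub ?_
      unfold Matrix.IsHermitian
      simp
    refine hH.posSemidef_iff_eigenvalues_nonneg.2 fun a => ?_
    have hmem := hH.eigenvalues_mem_spectrum_real a
    have hmem2 : hH.eigenvalues a + m ∈ spectrum ℝ (B i) := by
      rw [spectrum.mem_iff] at hmem ⊢
      convert hmem using 1
      rw [map_add, Algebra.algebraMap_eq_smul_one (R := ℝ)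
        (A := Matrix (Fin p) (Fin p) ℝ) m]
      abel
    rw [hspec i] at hmem2
    have h3 := hνmin i _ hmem2
    have h4 := hm i
    rw [Pi.zero_apply]; linarith
  have ray : ∀ i (y : Fin p → ℝ), m * dotProduct y y ≤ dotProduct y (Matrix.mulVec (B i) y) := by
    intro i y
    have h := (key i).dotProduct_mulVec_nonneg y
    simp only [Matrix.sub_mulVec, Matrix.smul_mulVec, Matrix.one_mulVec,
      dotProduct_sub, dotProduct_smul, star_trivial, smul_eq_mul] at h
    linarith
  -- Part 1 : m < 1
  have hm1 : m < 1 := by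
    by_contra hc
    push_neg at hc
    obtain ⟨j, hj⟩ := hne
    have hB := hBH j
    have htrB : (B j).trace = p := by
      have h2 : (B j).trace = (S⁻¹ * S⁻¹ * A j).trace := by
        rw [hBdef]
        rw [Matrix.trace_mul_cycle]
      rw [h2, ← hA₀inv, htr j]
    have hsum : ∑ a, hB.eigenvalues a = (p : ℝ) := by
      have hUs : (star (hB.eigenvectorUnitary : Matrix (Fin p) (Fin p) ℝ)) *
          (hB.eigenvectorUnitary : Matrix (Fin p) (Fin p) ℝ) = 1 := by
        simpa using unitary.coe_star_mul_self hB.eigenvectorUnitary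
      have h1 : (B j).trace = ∑ a, hB.eigenvalues a := by
        conv_lhs => rw [hB.spectral_theorem, Unitary.conjStarAlgAut_apply]
        rw [Matrix.trace_mul_comm, ← mul_assoc, hUs, one_mul]
        simp [Matrix.trace_diagonal]
      rw [← h1, htrB]
    have hge : ∀ a, (1:ℝ) ≤ hB.eigenvalues a := by
      intro a
      have := hB.eigenvalues_mem_spectrum_real a
      rw [hspec j] at this
      have := hνmin j _ this
      have := hm j
      linarith
    have heq1 : ∀ a, hB.eigenvalues a = 1 := by
      intro a
      by_contra hne1
      have hlt : ∑ _a : Fin p, (1:ℝ) < ∑ a, hB.eigenvalues a :=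
        Finset.sum_lt_sum (fun i _ => hge i)
          ⟨a, Finset.mem_univ a, lt_of_le_of_ne (hge a) (Ne.symm hne1)⟩
      simp [hsum] at hlt
    have hBj : B j = 1 := by
      have hst := hB.spectral_theorem
      have hdiag : Matrix.diagonal (RCLike.ofReal ∘ hB.eigenvalues) =
          (1 : Matrix (Fin p) (Fin p) ℝ) := by
        ext a b
        rcases eq_or_ne a b with rfl | hab
        · simp [heq1 a]
        · simp [Matrix.diagonal_apply_ne _ hab, Matrix.one_apply_ne hab]
      rw [hdiag, Unitary.conjStarAlgAut_apply, mul_one] at hst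
      have hUss : (hB.eigenvectorUnitary : Matrix (Fin p) (Fin p) ℝ) *
          star (hB.eigenvectorUnitary : Matrix (Fin p) (Fin p) ℝ) = 1 := by
        simpa using unitary.coe_mul_star_self hB.eigenvectorUnitary
      rw [hst]
      exact hUss
    apply hj
    rw [hSA j, hBj, mul_one, hS2]
  refine ⟨hm1, fun i t ht => ?_⟩
  obtain ⟨ht0, ht1⟩ := ht
  have h1m : 0 < 1 - m := by linarith
  have htm : t * (1 - m) < 1 := by
    rw [lt_div_iff₀ h1m] at ht1; linarith
  refine Matrix.PosDef.of_dotProduct_mulVec_pos ?_ ?_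
  · unfold Matrix.IsHermitian
    rw [Matrix.conjTranspose_add, Matrix.conjTranspose_smul, Matrix.conjTranspose_smul,
      hA₀.1.eq, (hA i).1.eq]
    simp
  · intro x hx
    set y := Matrix.mulVec S x with hy
    have hy0 : y ≠ 0 := by
      intro h
      apply hx
      have hinj := Matrix.mulVec_injective_iff_isUnit.2 hSU
      have : Matrix.mulVec S x = Matrix.mulVec S 0 := by rw [Matrix.mulVec_zero]; exact h
      exact hinj this
    have hyy : 0 < dotProduct y y := by
      have := Matrix.PosDef.one (n := Fin p) (R := ℝ) |>.dotProduct_mulVec_pos hy0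
      simpa using this
    have hST : ∀ z : Fin p → ℝ, dotProduct x (Matrix.mulVec S z) = dotProduct y z := by
      intro z
      rw [Matrix.dotProduct_mulVec, hy, ← Matrix.mulVec_transpose]
      congr 1
      rw [← Matrix.conjTranspose_eq_transpose_of_trivial, hSH.eq]
    have hq0 : dotProduct x (Matrix.mulVec A₀ x) = dotProduct y y := by
      rw [← hS2, ← Matrix.mulVec_mulVec, hST]
    have hqi : dotProduct x (Matrix.mulVec (A i) x) = dotProduct y (Matrix.mulVec (B i) y) := by
      rw [hSA i, ← Matrix.mulVec_mulVec, ← Matrix.mulVec_mulVec, hST]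
    have hray := ray i y
    have expand : dotProduct x (Matrix.mulVec ((1 - t) • A₀ + t • A i) x)
        = (1 - t) * dotProduct y y + t * dotProduct y (Matrix.mulVec (B i) y) := by
      rw [Matrix.add_mulVec, Matrix.smul_mulVec, Matrix.smul_mulVec,
        dotProduct_add, dotProduct_smul, dotProduct_smul,
        hq0, hqi]
      simp [smul_eq_mul]
    rw [star_trivial, expand]
    nlinarith [mul_le_mul_of_nonneg_left hray ht0]
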